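/- With L₀₁ = graph(u) and L₁₂ = graph(v) Lagrangian correspondences given by unitaries with block entries u_{ij}, v_{ij}, one has ker(1 - v₁₁u₁₁) ⊥ (ran(v₁₂) + ran(v₁₁u₁₀)) and ker(1 - u₁₁v₁₁) ⊥ (ran(u₁₀) + ran(u₁₁v₁₂)). -/

import Mathlib

noncomputable section

open Submodule ContinuousLinearMap

/-- Build an element of the `L²`-product from its two components. -/
abbrev p2 {α β : Type*} [AddCommGroup α] [Module ℝ α] [AddCommGroup β] [Module ℝ β]
    (a : α) (b : β) : WithLp 2 (α × β) :=
  (WithLp.linearEquiv 2 ℝ (α × β)).symm (a, b)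

/-- The `L²`-product as a linear equiv with the plain product. -/
abbrev unL2 {α β : Type*} [AddCommGroup α] [Module ℝ α] [AddCommGroup β] [Module ℝ β] :
    WithLp 2 (α × β) →ₗ[ℝ] α × β :=
  (WithLp.linearEquiv 2 ℝ (α × β)).toLinearMap

abbrev mkL2 {α β : Type*} [AddCommGroup α] [Module ℝ α] [AddCommGroup β] [Module ℝ β] :
    (α × β) →ₗ[ℝ] WithLp 2 (α × β) :=
  ((WithLp.linearEquiv 2 ℝ (α × β)).symm : (α × β) ≃ₗ[ℝ] WithLp 2 (α × β)).toLinearMap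

section Defs

variable {Vp Vm : Type*} [NormedAddCommGroup Vp] [InnerProductSpace ℝ Vp]
  [NormedAddCommGroup Vm] [InnerProductSpace ℝ Vm]

/-- The grading operator `Γ` on the super Hilbert space `V = Vp ⊕ Vm` (`Γ = 1` on `V⁺ = Vp`,
`Γ = -1` on `V⁻ = Vm`). -/
def sGrading : WithLp 2 (Vp × Vm) →ₗ[ℝ] WithLp 2 (Vp × Vm) :=
  mkL2 ∘ₗ ((LinearMap.fst ℝ Vp Vm).prod (-(LinearMap.snd ℝ Vp Vm))) ∘ₗ unL2

/-- `L` is isotropic for the form `B(x, y) = ⟪J x, y⟫`. -/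
def IsIsotropicWith {W : Type*} [NormedAddCommGroup W] [InnerProductSpace ℝ W]
    (J : W →ₗ[ℝ] W) (L : Submodule ℝ W) : Prop :=
  ∀ x ∈ L, ∀ y ∈ L, (inner ℝ (J x) y : ℝ) = 0

/-- `L` is a Lagrangian with respect to the grading `J`, i.e. `J L = Lᗮ`. -/
def IsLagrangianWith {W : Type*} [NormedAddCommGroup W] [InnerProductSpace ℝ W]
    (J : W →ₗ[ℝ] W) (L : Submodule ℝ W) : Prop :=
  L.map J = Lᗮ

/-- `L ⊆ V = Vp ⊕ Vm` is `B`-isotropic, where `B(x,y) = ⟪Γ x, y⟫`. -/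
def IsIsotropic (L : Submodule ℝ (WithLp 2 (Vp × Vm))) : Prop :=
  IsIsotropicWith sGrading L

/-- The image `Γ L` of a subspace under the grading operator. -/
def gradingMap (L : Submodule ℝ (WithLp 2 (Vp × Vm))) : Submodule ℝ (WithLp 2 (Vp × Vm)) :=
  L.map sGrading

/-- `L` is a Lagrangian in the super Hilbert space `Vp ⊕ Vm`: `Γ L = Lᗮ`. -/
def IsLagrangian (L : Submodule ℝ (WithLp 2 (Vp × Vm))) : Prop :=
  IsLagrangianWith sGrading L

/-- The restricted graph `graph′(u) = graph(u) ∩ (ker u)ᗮ` of `u : V⁺ → V⁻`, inside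
`V = Vp ⊕ Vm`. -/
def graphPI (u : Vp →L[ℝ] Vm) : Submodule ℝ (WithLp 2 (Vp × Vm)) :=
  (LinearMap.ker (u : Vp →ₗ[ℝ] Vm))ᗮ.map (mkL2 ∘ₗ (LinearMap.id : Vp →ₗ[ℝ] Vp).prod u.toLinearMap)

/-- The full graph `graph(u) = {(x, u x)}` of `u : V⁺ → V⁻`, inside `V = Vp ⊕ Vm`. -/
def graphFull (u : Vp →ₗ[ℝ] Vm) : Submodule ℝ (WithLp 2 (Vp × Vm)) :=
  (⊤ : Submodule ℝ Vp).map (mkL2 ∘ₗ (LinearMap.id : Vp →ₗ[ℝ] Vp).prod u)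

/-- The restricted graph of an operator `w : V⁻ → V⁺`, viewed inside `V = Vp ⊕ Vm`
via `y ↦ (w y, y)`. -/
def graphPIrev (w : Vm →L[ℝ] Vp) : Submodule ℝ (WithLp 2 (Vp × Vm)) :=
  (LinearMap.ker (w : Vm →ₗ[ℝ] Vp))ᗮ.map (mkL2 ∘ₗ w.toLinearMap.prod (LinearMap.id : Vm →ₗ[ℝ] Vm))

/-- `u` is a partial isometry: it is isometric on `(ker u)ᗮ`. -/
def IsPartialIsometry (u : Vp →L[ℝ] Vm) : Prop :=
  ∀ x ∈ (LinearMap.ker (u : Vp →ₗ[ℝ] Vm))ᗮ, ‖u x‖ = ‖x‖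

/-- `u` is unitary: a surjective isometry. -/
def IsUnitaryOp {E F : Type*} [NormedAddCommGroup E] [InnerProductSpace ℝ E]
    [NormedAddCommGroup F] [InnerProductSpace ℝ F] (u : E →L[ℝ] F) : Prop :=
  (∀ x, ‖u x‖ = ‖x‖) ∧ Function.Surjective u

end Defs

section CorrDefs

variable {Ap Am Bp Bm : Type*} [NormedAddCommGroup Ap] [InnerProductSpace ℝ Ap]
  [NormedAddCommGroup Am] [InnerProductSpace ℝ Am]
  [NormedAddCommGroup Bp] [InnerProductSpace ℝ Bp]
  [NormedAddCommGroup Bm] [InnerProductSpace ℝ Bm]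

/-- The grading `Γ(x₀, x₁) = (-Γ₀ x₀, Γ₁ x₁)` on `Π V₀ ⊕ V₁`, where `V₀ = Ap ⊕ Am` and
`V₁ = Bp ⊕ Bm`. -/
def corrGrading :
    WithLp 2 (WithLp 2 (Ap × Am) × WithLp 2 (Bp × Bm)) →ₗ[ℝ]
      WithLp 2 (WithLp 2 (Ap × Am) × WithLp 2 (Bp × Bm)) :=
  mkL2 ∘ₗ ((-(sGrading : WithLp 2 (Ap × Am) →ₗ[ℝ] WithLp 2 (Ap × Am))).prodMap
    (sGrading : WithLp 2 (Bp × Bm) →ₗ[ℝ] WithLp 2 (Bp × Bm))) ∘ₗ unL2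

/-- `L` is a Lagrangian correspondence from `V₀ = Ap ⊕ Am` to `V₁ = Bp ⊕ Bm`, i.e. a
Lagrangian in `Π V₀ ⊕ V₁`. -/
def IsLagCorr (L : Submodule ℝ (WithLp 2 (WithLp 2 (Ap × Am) × WithLp 2 (Bp × Bm)))) : Prop :=
  IsLagrangianWith corrGrading L

/-- `L` is `B`-isotropic in `Π V₀ ⊕ V₁`. -/
def IsIsotropicCorr (L : Submodule ℝ (WithLp 2 (WithLp 2 (Ap × Am) × WithLp 2 (Bp × Bm)))) :
    Prop :=
  IsIsotropicWith corrGrading L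

/-- The graph of a map `u : (ΠV₀ ⊕ V₁)⁺ = V₀⁻ ⊕ V₁⁺ → V₀⁺ ⊕ V₁⁻ = (ΠV₀ ⊕ V₁)⁻`, as a linear
map into `ΠV₀ ⊕ V₁`; an element `(b, c)` is sent to `((u(b,c)₁, b), (c, u(b,c)₂))`. -/
def corrGraphMap (u : WithLp 2 (Am × Bp) →L[ℝ] WithLp 2 (Ap × Bm)) :
    WithLp 2 (Am × Bp) →ₗ[ℝ] WithLp 2 (WithLp 2 (Ap × Am) × WithLp 2 (Bp × Bm)) :=
  mkL2 ∘ₗ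
    ((mkL2 ∘ₗ (((LinearMap.fst ℝ Ap Bm) ∘ₗ unL2 ∘ₗ u.toLinearMap).prod
        ((LinearMap.fst ℝ Am Bp) ∘ₗ unL2))).prod
      (mkL2 ∘ₗ (((LinearMap.snd ℝ Am Bp) ∘ₗ unL2).prod
        ((LinearMap.snd ℝ Ap Bm) ∘ₗ unL2 ∘ₗ u.toLinearMap))))

/-- The graph of `u : (ΠV₀ ⊕ V₁)⁺ → (ΠV₀ ⊕ V₁)⁻` as a subspace of `ΠV₀ ⊕ V₁`. -/
def corrGraph (u : WithLp 2 (Am × Bp) →L[ℝ] WithLp 2 (Ap × Bm)) :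
    Submodule ℝ (WithLp 2 (WithLp 2 (Ap × Am) × WithLp 2 (Bp × Bm))) :=
  LinearMap.range (corrGraphMap u)

end CorrDefs

section Comp

variable {W0 W1 W2 : Type*} [NormedAddCommGroup W0] [InnerProductSpace ℝ W0]
  [NormedAddCommGroup W1] [InnerProductSpace ℝ W1]
  [NormedAddCommGroup W2] [InnerProductSpace ℝ W2]

/-- The composition `L₁₂ ∘ L₀₁ = {(x₀, x₂) | ∃ x₁, (x₀, x₁) ∈ L₀₁ ∧ (x₁, x₂) ∈ L₁₂}` of two
correspondences `L₀₁ ⊆ W0 ⊕ W1` and `L₁₂ ⊆ W1 ⊕ W2`. -/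
def compCorr (L01 : Submodule ℝ (WithLp 2 (W0 × W1))) (L12 : Submodule ℝ (WithLp 2 (W1 × W2))) :
    Submodule ℝ (WithLp 2 (W0 × W2)) :=
  Submodule.map
    (mkL2 ∘ₗ
      (((LinearMap.fst ℝ W0 W1 ∘ₗ unL2) ∘ₗ
          LinearMap.fst ℝ (WithLp 2 (W0 × W1)) (WithLp 2 (W1 × W2))).prod
        ((LinearMap.snd ℝ W1 W2 ∘ₗ unL2) ∘ₗ
          LinearMap.snd ℝ (WithLp 2 (W0 × W1)) (WithLp 2 (W1 × W2)))))
    ((L01.prod L12) ⊓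
      LinearMap.ker
        (((LinearMap.snd ℝ W0 W1 ∘ₗ unL2) ∘ₗ
            LinearMap.fst ℝ (WithLp 2 (W0 × W1)) (WithLp 2 (W1 × W2))) -
          ((LinearMap.fst ℝ W1 W2 ∘ₗ unL2) ∘ₗ
            LinearMap.snd ℝ (WithLp 2 (W0 × W1)) (WithLp 2 (W1 × W2)))))

end Comp


/-- The full graph of a bounded operator `S : E → F`, inside `E ⊕ F`. -/
def graphFullCorr {E F : Type*} [NormedAddCommGroup E] [InnerProductSpace ℝ E]
    [NormedAddCommGroup F] [InnerProductSpace ℝ F] (S : E →L[ℝ] F) :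
    Submodule ℝ (WithLp 2 (E × F)) :=
  (⊤ : Submodule ℝ E).map (mkL2 ∘ₗ (LinearMap.id : E →ₗ[ℝ] E).prod S.toLinearMap)

/-- `u` is a Hilbert–Schmidt operator: `∑ ‖u eᵢ‖²` converges for every Hilbert basis. -/
def IsHilbertSchmidt {E F : Type*} [NormedAddCommGroup E] [InnerProductSpace ℝ E]
    [NormedAddCommGroup F] [InnerProductSpace ℝ F] (u : E →L[ℝ] F) : Prop :=
  ∀ (ι : Type) (b : HilbertBasis ι ℝ E), Summable fun i => ‖u (b i)‖ ^ 2

@[simp] lemma p2_fst {α β : Type*} [AddCommGroup α] [Module ℝ α] [AddCommGroup β] [Module ℝ β]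
    (a : α) (b : β) : (p2 a b).fst = a := rfl

@[simp] lemma p2_snd {α β : Type*} [AddCommGroup α] [Module ℝ α] [AddCommGroup β] [Module ℝ β]
    (a : α) (b : β) : (p2 a b).snd = b := rfl

lemma inner_p2 {α β : Type*} [NormedAddCommGroup α] [InnerProductSpace ℝ α]
    [NormedAddCommGroup β] [InnerProductSpace ℝ β] (a c : α) (b d : β) :
    (inner ℝ (p2 a b) (p2 c d) : ℝ) = inner ℝ a c + inner ℝ b d := by
  simp [WithLp.prod_inner_apply]

lemma unitary_inner {E F : Type*} [NormedAddCommGroup E] [InnerProductSpace ℝ E]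
    [NormedAddCommGroup F] [InnerProductSpace ℝ F] (u : E →L[ℝ] F)
    (hu : IsUnitaryOp u) (z w : E) : (inner ℝ (u z) (u w) : ℝ) = inner ℝ z w :=
  (⟨u.toLinearMap, hu.1⟩ : E →ₗᵢ[ℝ] F).inner_map_map z w

/-- With `L₀₁ = graph(u)`, `L₁₂ = graph(v)` as above,
`ker(1 - v₁₁u₁₁) ⊥ (ran v₁₂ + ran(v₁₁u₁₀))` and
`ker(1 - u₁₁v₁₁) ⊥ (ran u₁₀ + ran(u₁₁v₁₂))`. -/
theorem kernel_perp_ranges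
    {V0p V0m V1p V1m V2p V2m : Type*}
    [NormedAddCommGroup V0p] [InnerProductSpace ℝ V0p] [CompleteSpace V0p]
    [NormedAddCommGroup V0m] [InnerProductSpace ℝ V0m] [CompleteSpace V0m]
    [NormedAddCommGroup V1p] [InnerProductSpace ℝ V1p] [CompleteSpace V1p]
    [NormedAddCommGroup V1m] [InnerProductSpace ℝ V1m] [CompleteSpace V1m]
    [NormedAddCommGroup V2p] [InnerProductSpace ℝ V2p] [CompleteSpace V2p]
    [NormedAddCommGroup V2m] [InnerProductSpace ℝ V2m] [CompleteSpace V2m]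
    (u : WithLp 2 (V0m × V1p) →L[ℝ] WithLp 2 (V0p × V1m))
    (v : WithLp 2 (V1m × V2p) →L[ℝ] WithLp 2 (V1p × V2m))
    (u00 : V0m →L[ℝ] V0p) (u01 : V1p →L[ℝ] V0p) (u10 : V0m →L[ℝ] V1m) (u11 : V1p →L[ℝ] V1m)
    (v11 : V1m →L[ℝ] V1p) (v12 : V2p →L[ℝ] V1p) (v21 : V1m →L[ℝ] V2m) (v22 : V2p →L[ℝ] V2m)
    (hub : ∀ x : WithLp 2 (V0m × V1p),
      u x = p2 (u00 x.fst + u01 x.snd) (u10 x.fst + u11 x.snd))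
    (hvb : ∀ y : WithLp 2 (V1m × V2p),
      v y = p2 (v11 y.fst + v12 y.snd) (v21 y.fst + v22 y.snd))
    (hu : IsUnitaryOp u) (hv : IsUnitaryOp v) :
    (∀ x : V1p, v11 (u11 x) = x →
      ∀ (a : V2p) (b : V0m), (inner ℝ x (v12 a + v11 (u10 b)) : ℝ) = 0) ∧
    (∀ y : V1m, u11 (v11 y) = y →
      ∀ (b : V0m) (a : V2p), (inner ℝ y (u10 b + u11 (v12 a)) : ℝ) = 0) := by
  have hU : ∀ (b b' : V0m) (x x' : V1p),
      (inner ℝ (u00 b + u01 x) (u00 b' + u01 x') : ℝ)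
        + inner ℝ (u10 b + u11 x) (u10 b' + u11 x') = inner ℝ b b' + inner ℝ x x' := by
    intro b b' x x'
    have h := unitary_inner u hu (p2 b x) (p2 b' x')
    rw [hub, hub] at h
    simpa [inner_p2] using h
  have hV : ∀ (y y' : V1m) (a a' : V2p),
      (inner ℝ (v11 y + v12 a) (v11 y' + v12 a') : ℝ)
        + inner ℝ (v21 y + v22 a) (v21 y' + v22 a') = inner ℝ y y' + inner ℝ a a' := by
    intro y y' a a'
    have h := unitary_inner v hv (p2 y a) (p2 y' a')
    rw [hvb, hvb] at h
    simpa [inner_p2] using h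
  constructor
  · intro x hx a b
    have E1 : (inner ℝ (u01 x) (u01 x) : ℝ) + inner ℝ (u11 x) (u11 x) = inner ℝ x x := by
      simpa using hU 0 0 x x
    have E2 : (inner ℝ x x : ℝ) + inner ℝ (v21 (u11 x)) (v21 (u11 x)) = inner ℝ (u11 x) (u11 x) := by
      have := hV (u11 x) (u11 x) 0 0
      simpa [hx] using this
    have hz : (inner ℝ (u01 x) (u01 x) : ℝ) + inner ℝ (v21 (u11 x)) (v21 (u11 x)) = 0 := by
      linarith
    have h1 : u01 x = 0 := by
      rw [← inner_self_eq_zero (𝕜 := ℝ)]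
      have := real_inner_self_nonneg (x := u01 x)
      have := real_inner_self_nonneg (x := v21 (u11 x))
      linarith
    have h2 : v21 (u11 x) = 0 := by
      rw [← inner_self_eq_zero (𝕜 := ℝ)]
      have := real_inner_self_nonneg (x := u01 x)
      have := real_inner_self_nonneg (x := v21 (u11 x))
      linarith
    have F1 : (inner ℝ x (v12 a) : ℝ) = 0 := by
      have := hV (u11 x) 0 0 a
      simpa [hx, h2] using this
    have F2 : (inner ℝ x (v11 (u10 b)) : ℝ) = inner ℝ (u11 x) (u10 b) := by
      have := hV (u11 x) (u10 b) 0 0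
      simpa [hx, h2] using this
    have F3 : (inner ℝ (u11 x) (u10 b) : ℝ) = 0 := by
      have := hU 0 b x 0
      simpa [h1] using this
    rw [inner_add_right, F1, F2, F3, add_zero]
  · intro y hy b a
    have E1 : (inner ℝ (v11 y) (v11 y) : ℝ) + inner ℝ (v21 y) (v21 y) = inner ℝ y y := by
      simpa using hV y y 0 0
    have E2 : (inner ℝ (u01 (v11 y)) (u01 (v11 y)) : ℝ) + inner ℝ y y
        = inner ℝ (v11 y) (v11 y) := by
      have := hU 0 0 (v11 y) (v11 y)
      simpa [hy] using this
    have h1 : u01 (v11 y) = 0 := by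
      rw [← inner_self_eq_zero (𝕜 := ℝ)]
      have := real_inner_self_nonneg (x := u01 (v11 y))
      have := real_inner_self_nonneg (x := v21 y)
      linarith
    have h2 : v21 y = 0 := by
      rw [← inner_self_eq_zero (𝕜 := ℝ)]
      have := real_inner_self_nonneg (x := u01 (v11 y))
      have := real_inner_self_nonneg (x := v21 y)
      linarith
    have F1 : (inner ℝ y (u10 b) : ℝ) = 0 := by
      have := hU 0 b (v11 y) 0
      simpa [hy, h1] using this
    have F2 : (inner ℝ y (u11 (v12 a)) : ℝ) = inner ℝ (v11 y) (v12 a) := by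
      have := hU 0 0 (v11 y) (v12 a)
      simpa [hy, h1] using this
    have F3 : (inner ℝ (v11 y) (v12 a) : ℝ) = 0 := by
      have := hV y 0 0 a
      simpa [h2] using this
    rw [inner_add_right, F1, F2, F3, zero_add]
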